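/- Let K be a nonempty subset of a metric space (X,d) and let T, f : K → K be two self-maps such that the closure of T(K) is contained in f(K). Suppose there is a monotonically increasing continuous function φ : [0,∞) → [0,∞) with φ(t) < t for all t > 0 such that for all x, y ∈ K, d(Tx,Ty) ≤ φ( max{ d(fx,fy), d(Tx,fx), d(Ty,fy), (1/2)[d(Tx,fy) + d(Ty,fx)] } ). If either closure(T(K)) or f(K) is a complete metric subspace and the pair (T,f) is weakly compatible, then F(T) ∩ F(f) is a singleton. -/
import Mathlib


/-- Corollary: common fixed point for a weakly compatible pair `(T, f)` of self-maps of a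
subset `K` of a metric space under a `φ`-contractive condition, assuming either
`closure (T '' K)` or `f '' K` is complete. -/
theorem common_fixed_point_two_maps
    {X : Type*} [MetricSpace X] (K : Set X) (hK : K.Nonempty)
    (T f : X → X)
    (hT : Set.MapsTo T K K) (hf : Set.MapsTo f K K)
    (hsub : closure (T '' K) ⊆ f '' K)
    (φ : ℝ → ℝ)
    (hφmono : MonotoneOn φ (Set.Ici 0))
    (hφcont : ContinuousOn φ (Set.Ici 0))
    (hφnonneg : ∀ t ≥ (0 : ℝ), 0 ≤ φ t)
    (hφlt : ∀ t > (0 : ℝ), φ t < t)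
    (hcontr : ∀ x ∈ K, ∀ y ∈ K,
      dist (T x) (T y) ≤ φ
        (max (max (dist (f x) (f y)) (dist (T x) (f x)))
          (max (dist (T y) (f y)) ((dist (T x) (f y) + dist (T y) (f x)) / 2))))
    (hcomplete : IsComplete (closure (T '' K)) ∨ IsComplete (f '' K))
    (hwc : ∀ x ∈ K, T x = f x → T (f x) = f (T x)) :
    ∃! z, z ∈ K ∧ T z = z ∧ f z = z := by
  classical
  -- basic facts about φ
  have hφle : ∀ t ≥ (0:ℝ), φ t ≤ t := by
    intro t ht
    rcases eq_or_lt_of_le ht with h | h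
    · rw [← h]
      by_contra hcon
      push_neg at hcon
      have h1 : φ 0 ≤ φ (φ 0) :=
        hφmono (Set.mem_Ici.2 le_rfl) (Set.mem_Ici.2 hcon.le) hcon.le
      have h2 : φ (φ 0) < φ 0 := hφlt _ hcon
      linarith
    · exact (hφlt t h).le
  -- helper : near any c > 0 we can find η with φ (c + η) < c - η
  have helper : ∀ c > (0:ℝ), ∃ η > 0, φ (c + η) < c - η := by
    intro c hc
    have hcI : c ∈ Set.Ici (0:ℝ) := le_of_lt hc
    have hcw := hφcont c hcI
    rw [Metric.continuousWithinAt_iff] at hcw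
    have hφc : φ c < c := hφlt c hc
    obtain ⟨δ, hδpos, hδ⟩ := hcw ((c - φ c)/2) (by linarith)
    refine ⟨min (δ/2) ((c - φ c)/4), lt_min (by linarith) (by linarith), ?_⟩
    set η := min (δ/2) ((c - φ c)/4) with hη
    have hη1 : η ≤ δ/2 := min_le_left _ _
    have hη2 : η ≤ (c - φ c)/4 := min_le_right _ _
    have hηpos : 0 < η := lt_min (by linarith) (by linarith)
    have hmem : c + η ∈ Set.Ici (0:ℝ) := by
      simp only [Set.mem_Ici]; linarith
    have hdist : dist (c + η) c < δ := by
      rw [Real.dist_eq]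
      rw [abs_of_nonneg (by linarith : (0:ℝ) ≤ c + η - c)]
      linarith
    have := hδ hmem hdist
    rw [Real.dist_eq, abs_lt] at this
    linarith [this.2]
  -- construct the iteration sequence
  obtain ⟨x0, hx0⟩ := hK
  have key : ∀ a, a ∈ K → ∃ b, b ∈ K ∧ f b = T a := by
    intro a ha
    obtain ⟨b, hb, hfb⟩ := hsub (subset_closure (Set.mem_image_of_mem T ha))
    exact ⟨b, hb, hfb⟩
  choose nxt hnxtK hnxtf using key
  let g : {a : X // a ∈ K} → {a : X // a ∈ K} := fun a => ⟨nxt a a.2, hnxtK a a.2⟩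
  let xs : ℕ → {a : X // a ∈ K} := fun n => g^[n] ⟨x0, hx0⟩
  have hx : ∀ n, (xs n : X) ∈ K := fun n => (xs n).2
  have hstep : ∀ n, f (xs (n+1)) = T (xs n) := by
    intro n
    have hgx : xs (n+1) = g (xs n) := Function.iterate_succ_apply' g n _
    rw [hgx]
    exact hnxtf _ (xs n).2
  obtain ⟨y, hy⟩ : ∃ y : ℕ → X, ∀ n, y n = T (xs n) := ⟨_, fun _ => rfl⟩
  have hfy : ∀ n, f (xs (n+1)) = y n := fun n => (hstep n).trans (hy n).symm
  obtain ⟨d, hd⟩ : ∃ d : ℕ → ℝ, ∀ n, d n = dist (y (n+1)) (y n) := ⟨_, fun _ => rfl⟩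
  have hdnn : ∀ n, 0 ≤ d n := fun n => (hd n) ▸ dist_nonneg
  -- the main estimate
  have E : ∀ n m : ℕ, dist (y (n+1)) (y (m+1)) ≤
      φ (max (max (dist (y n) (y m)) (d n))
        (max (d m) ((dist (y (n+1)) (y m) + dist (y (m+1)) (y n)) / 2))) := by
    intro n m
    have h := hcontr _ (hx (n+1)) _ (hx (m+1))
    rw [hfy n, hfy m] at h
    simp only [← hy] at h
    rw [← hd n, ← hd m] at h
    exact h
  -- successive distances decrease
  have dstep : ∀ n, d (n+1) ≤ φ (d n) := by
    intro n
    have h := E (n+1) n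
    rw [← hd n, ← hd (n+1), dist_self] at h
    have htri : dist (y (n+2)) (y n) ≤ d (n+1) + d n := by
      rw [hd n, hd (n+1)]
      exact dist_triangle _ _ _
    set a := d n
    set b := d (n+1)
    have ha := hdnn n
    have hb := hdnn (n+1)
    have hMle : max (max a b) (max a ((dist (y (n+2)) (y n) + 0) / 2)) ≤ max a b := by
      apply max_le le_rfl
      apply max_le (le_max_left _ _)
      have : (dist (y (n+2)) (y n) + 0) / 2 ≤ (b + a) / 2 := by linarith
      refine this.trans ?_
      rcases le_total a b with h' | h'
      · refine le_trans ?_ (le_max_right a b); linarith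
      · refine le_trans ?_ (le_max_left a b); linarith
    have hMnn : (0:ℝ) ≤ max (max a b) (max a ((dist (y (n+2)) (y n) + 0) / 2)) :=
      le_trans ha (le_trans (le_max_left _ _) (le_max_left _ _))
    have hmaxnn : (0:ℝ) ≤ max a b := le_trans ha (le_max_left _ _)
    have hφM : b ≤ φ (max a b) :=
      h.trans (hφmono (Set.mem_Ici.2 hMnn) (Set.mem_Ici.2 hmaxnn) hMle)
    rcases le_total b a with h' | h'
    · rwa [max_eq_left h'] at hφM
    · rw [max_eq_right h'] at hφM
      rcases eq_or_lt_of_le hb with hb0 | hb0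
      · have hb' : b = 0 := hb0.symm
        rw [hb']; exact hφnonneg a ha
      · have := hφlt b hb0; linarith
  have dmono : ∀ n, d (n+1) ≤ d n := fun n => (dstep n).trans (hφle _ (hdnn n))
  have hdanti : Antitone d := antitone_nat_of_succ_le dmono
  -- d tends to 0
  have hdlim : Filter.Tendsto d Filter.atTop (nhds 0) := by
    have hbdd : BddBelow (Set.range d) := ⟨0, by rintro _ ⟨n, rfl⟩; exact hdnn n⟩
    have hconv := tendsto_atTop_ciInf hdanti hbdd
    have hL0 : 0 ≤ ⨅ n, d n := le_ciInf fun n => hdnn n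
    have hLle : ∀ n, (⨅ n, d n) ≤ d n := fun n => ciInf_le hbdd n
    rcases eq_or_lt_of_le hL0 with hL | hL
    · rwa [← hL] at hconv
    · exfalso
      obtain ⟨η, hη, hφη⟩ := helper _ hL
      obtain ⟨N, hN⟩ := (Metric.tendsto_atTop.mp hconv) η hη
      have h1 : d N < (⨅ n, d n) + η := by
        have := hN N le_rfl
        rw [Real.dist_eq, abs_lt] at this
        linarith [this.2]
      have h2 : φ (d N) ≤ φ ((⨅ n, d n) + η) :=
        hφmono (Set.mem_Ici.2 (hdnn N)) (Set.mem_Ici.2 (by linarith)) h1.le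
      have h3 := dstep N
      have h4 := hLle (N+1)
      linarith
  -- the sequence y is Cauchy
  have hcauchy : CauchySeq y := by
    rw [Metric.cauchySeq_iff']
    intro ε hε
    obtain ⟨η, hη, hφη⟩ := helper (ε/2) (by linarith)
    set δ := min (η/2) (ε/8) with hδdef
    have hδ1 : δ ≤ η/2 := min_le_left _ _
    have hδ2 : δ ≤ ε/8 := min_le_right _ _
    have hδpos : 0 < δ := by positivity
    have hφ2δ : φ (ε/2 + 2*δ) ≤ ε/2 - δ := by
      have h1 : φ (ε/2 + 2*δ) ≤ φ (ε/2 + η) :=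
        hφmono (Set.mem_Ici.2 (by linarith)) (Set.mem_Ici.2 (by linarith)) (by linarith)
      linarith
    obtain ⟨N, hN⟩ := (Metric.tendsto_atTop.mp hdlim) (δ/2) (by positivity)
    have hNd : ∀ n ≥ N, d n < δ/2 := by
      intro n hn
      have := hN n hn
      rw [Real.dist_eq, abs_lt] at this
      linarith [this.2]
    have claim : ∀ m, ∀ n, N ≤ n → n ≤ m → dist (y n) (y m) ≤ ε/2 + δ := by
      intro m
      induction m with
      | zero =>
        intro n _ hn0
        interval_cases n
        rw [dist_self]; linarith
      | succ m ih =>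
        intro n hNn hn
        rcases eq_or_lt_of_le hn with heq | hlt
        · rw [heq, dist_self]; linarith
        · have hnm : n ≤ m := Nat.lt_succ_iff.mp hlt
          rcases eq_or_lt_of_le hnm with heq2 | hlt2
          · subst heq2
            have : dist (y n) (y (n+1)) = d n := by rw [hd n, dist_comm]
            have := hNd n hNn
            rw [show dist (y n) (y (n+1)) = d n from by rw [hd n, dist_comm]]
            linarith
          · have hn1m : n + 1 ≤ m := hlt2
            have A := ih n hNn hnm
            have B := ih (n+1) (hNn.trans (Nat.le_succ n)) hn1m
            have hdn := hNd n hNn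
            have hdm := hNd m (hNn.trans hnm)
            have hE := E n m
            have htri : dist (y (m+1)) (y n) ≤ d m + dist (y n) (y m) := by
              rw [hd m, dist_comm (y n) (y m)]
              exact dist_triangle _ _ _
            have hM : max (max (dist (y n) (y m)) (d n))
                (max (d m) ((dist (y (n+1)) (y m) + dist (y (m+1)) (y n)) / 2))
                ≤ ε/2 + 2*δ := by
              apply max_le (max_le (by linarith) (by linarith))
              apply max_le (by linarith)
              linarith
            have hMnn : (0:ℝ) ≤ max (max (dist (y n) (y m)) (d n))
                (max (d m) ((dist (y (n+1)) (y m) + dist (y (m+1)) (y n)) / 2)) :=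
              le_trans dist_nonneg (le_trans (le_max_left _ _) (le_max_left _ _))
            have hφM : dist (y (n+1)) (y (m+1)) ≤ φ (ε/2 + 2*δ) :=
              hE.trans (hφmono (Set.mem_Ici.2 hMnn) (Set.mem_Ici.2 (by linarith)) hM)
            have htri2 : dist (y n) (y (m+1)) ≤ d n + dist (y (n+1)) (y (m+1)) := by
              calc dist (y n) (y (m+1)) ≤ dist (y n) (y (n+1)) + dist (y (n+1)) (y (m+1)) :=
                    dist_triangle _ _ _
                _ = d n + dist (y (n+1)) (y (m+1)) := by rw [hd n, dist_comm]
            linarith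
    refine ⟨N, fun n hn => ?_⟩
    have := claim n N le_rfl hn
    rw [dist_comm]
    linarith
  -- obtain the limit point p in f '' K
  have hymem : ∀ n, y n ∈ T '' K := fun n => (hy n) ▸ Set.mem_image_of_mem T (hx n)
  have hyf : ∀ n, y n ∈ f '' K := fun n => (hfy n) ▸ Set.mem_image_of_mem f (hx (n+1))
  obtain ⟨p, hpf, hplim⟩ : ∃ p ∈ f '' K, Filter.Tendsto y Filter.atTop (nhds p) := by
    rcases hcomplete with hc | hc
    · obtain ⟨p, hp, hl⟩ :=
        cauchySeq_tendsto_of_isComplete hc (fun n => subset_closure (hymem n)) hcauchy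
      exact ⟨p, hsub hp, hl⟩
    · obtain ⟨p, hp, hl⟩ := cauchySeq_tendsto_of_isComplete hc hyf hcauchy
      exact ⟨p, hp, hl⟩
  obtain ⟨u, huK, hfu⟩ := hpf
  -- T u = p
  have hTu : T u = p := by
    by_contra hne
    have hc : 0 < dist (T u) p := dist_pos.2 hne
    obtain ⟨η, hη, hφη⟩ := helper _ hc
    obtain ⟨N1, hN1⟩ := (Metric.tendsto_atTop.mp hplim) η hη
    obtain ⟨N2, hN2⟩ := (Metric.tendsto_atTop.mp hdlim) η hη
    set n := max N1 N2 with hn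
    have hyn : dist (y n) p < η := hN1 n (le_max_left _ _)
    have hyn1 : dist (y (n+1)) p < η := hN1 (n+1) ((le_max_left _ _).trans (Nat.le_succ n))
    have hdn : d n < η := by
      have := hN2 n (le_max_right _ _)
      rw [Real.dist_eq, abs_lt] at this
      linarith [this.2]
    have hE := hcontr u huK _ (hx (n+1))
    rw [hfu, hfy n] at hE
    simp only [← hy] at hE
    set c := dist (T u) p with hcdef
    have h1 : dist p (y n) < η := by rw [dist_comm]; exact hyn
    have h2 : dist (y (n+1)) (y n) < η := by rw [← hd n]; exact hdn
    have h3 : dist (T u) (y n) ≤ c + dist p (y n) := dist_triangle _ _ _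
    have hM : max (max (dist p (y n)) (dist (T u) p))
        (max (dist (y (n+1)) (y n)) ((dist (T u) (y n) + dist (y (n+1)) p) / 2))
        ≤ c + η := by
      apply max_le (max_le (by linarith) (by rw [← hcdef]; linarith))
      apply max_le (by linarith)
      linarith
    have hMnn : (0:ℝ) ≤ max (max (dist p (y n)) (dist (T u) p))
        (max (dist (y (n+1)) (y n)) ((dist (T u) (y n) + dist (y (n+1)) p) / 2)) :=
      le_trans dist_nonneg (le_trans (le_max_left _ _) (le_max_left _ _))
    have hφM : dist (T u) (y (n+1)) ≤ φ (c + η) :=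
      hE.trans (hφmono (Set.mem_Ici.2 hMnn) (Set.mem_Ici.2 (by linarith)) hM)
    have htri : c ≤ dist (T u) (y (n+1)) + dist (y (n+1)) p := dist_triangle _ _ _
    linarith
  have hTfu : T u = f u := hTu.trans hfu.symm
  have hpK : p ∈ K := hfu ▸ hf huK
  have hcom : T p = f p := by
    have := hwc u huK hTfu
    rwa [hfu, hTu] at this
  -- T p = p
  have hTp : T p = p := by
    by_contra hne
    have hc : 0 < dist (T p) p := dist_pos.2 hne
    have hE := hcontr p hpK u huK
    rw [hfu, ← hcom, hTu] at hE
    have hhalf : (dist (T p) p + dist p (T p)) / 2 = dist (T p) p := by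
      rw [dist_comm p (T p)]; ring
    rw [hhalf, dist_self, dist_self,
      max_eq_left dist_nonneg, max_eq_right dist_nonneg, max_self] at hE
    have := hφlt _ hc
    linarith
  have hfp : f p = p := hcom.symm.trans hTp
  -- conclusion
  refine ⟨p, ⟨hpK, hTp, hfp⟩, ?_⟩
  rintro z ⟨hzK, hTz, hfz⟩
  by_contra hne
  have hc : 0 < dist z p := dist_pos.2 hne
  have hE := hcontr z hzK p hpK
  rw [hTz, hfz, hTp, hfp] at hE
  have hhalf : (dist z p + dist p z) / 2 = dist z p := by
    rw [dist_comm p z]; ring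
  rw [hhalf, dist_self, dist_self,
    max_eq_left dist_nonneg, max_eq_right dist_nonneg, max_self] at hE
  have := hφlt _ hc
  linarith
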